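/- For real parameters with Re(b) > 0 and ξ ≠ η, the definite integral ∫₀^z t^{b-1} e^{-t} Φ(ξ,b,t) Φ(η,b,t) dt equals (e^{-z} z^b / (b(η-ξ))) · [η Φ(ξ,b,z) Φ(η+1,b+1,z) − ξ Φ(η,b,z) Φ(ξ+1,b+1,z)], where Φ is the confluent hypergeometric function of the first kind. -/

import Mathlib

open Real

/-- The confluent hypergeometric function of the first kind
`Φ(a,b,z) = Σ_{n≥0} (a)_n / ((b)_n n!) z^n`. -/
noncomputable def Phi (a b z : ℝ) : ℝ :=
  ∑' n : ℕ, ((ascPochhammer ℝ n).eval a / ((ascPochhammer ℝ n).eval b * (n.factorial : ℝ))) * z ^ n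

noncomputable def pc (a b : ℝ) (n : ℕ) : ℝ :=
  (ascPochhammer ℝ n).eval a / ((ascPochhammer ℝ n).eval b * (n.factorial : ℝ))

lemma poch_succ_eval (a : ℝ) (n : ℕ) :
    (ascPochhammer ℝ (n+1)).eval a = (ascPochhammer ℝ n).eval a * (a + n) :=
  ascPochhammer_succ_eval n a

lemma poch_succ_eval_left (a : ℝ) (n : ℕ) :
    (ascPochhammer ℝ (n+1)).eval a = a * (ascPochhammer ℝ n).eval (a + 1) := by
  rw [ascPochhammer_succ_left]
  simp [Polynomial.eval_comp]

lemma poch_pos {b : ℝ} (hb : 0 < b) (n : ℕ) : 0 < (ascPochhammer ℝ n).eval b :=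
  ascPochhammer_pos n b hb

lemma poch_abs_le {b : ℝ} (hb : 0 < b) (a : ℝ) (n : ℕ) :
    |(ascPochhammer ℝ n).eval a| ≤ ((b + |a|)/b)^n * (ascPochhammer ℝ n).eval b := by
  induction n with
  | zero => simp
  | succ n ih =>
    rw [poch_succ_eval, poch_succ_eval]
    have h1 : |(ascPochhammer ℝ n).eval a * (a + n)| =
        |(ascPochhammer ℝ n).eval a| * |a + n| := abs_mul _ _
    rw [h1]
    have hM : (1:ℝ) ≤ (b + |a|)/b := by
      rw [le_div_iff₀ hb]; nlinarith [abs_nonneg a]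
    have h2 : |a + (n:ℝ)| ≤ ((b + |a|)/b) * (b + n) := by
      have : |a + (n:ℝ)| ≤ |a| + n := by
        calc |a + (n:ℝ)| ≤ |a| + |(n:ℝ)| := abs_add_le _ _
        _ = |a| + n := by rw [Nat.abs_cast]
      refine this.trans ?_
      have hn : (0:ℝ) ≤ n := Nat.cast_nonneg n
      rw [div_mul_eq_mul_div, le_div_iff₀ hb]
      nlinarith [abs_nonneg a]
    calc |(ascPochhammer ℝ n).eval a| * |a + n|
        ≤ (((b + |a|)/b)^n * (ascPochhammer ℝ n).eval b) * (((b + |a|)/b) * (b + n)) := by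
          apply mul_le_mul ih h2 (abs_nonneg _)
          exact mul_nonneg (by positivity) (poch_pos hb n).le
      _ = ((b + |a|)/b)^(n+1) * ((ascPochhammer ℝ n).eval b * (b + n)) := by ring

lemma pc_abs_le {b : ℝ} (hb : 0 < b) (a : ℝ) (n : ℕ) :
    |pc a b n| ≤ ((b + |a|)/b)^n / n.factorial := by
  unfold pc
  rw [abs_div]
  have hden : |(ascPochhammer ℝ n).eval b * (n.factorial : ℝ)|
      = (ascPochhammer ℝ n).eval b * (n.factorial : ℝ) := by
    exact abs_of_pos (mul_pos (poch_pos hb n) (by positivity))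
  rw [hden, div_le_div_iff₀ (mul_pos (poch_pos hb n) (by positivity)) (by positivity)]
  calc |(ascPochhammer ℝ n).eval a| * (n.factorial : ℝ)
      ≤ (((b + |a|)/b)^n * (ascPochhammer ℝ n).eval b) * (n.factorial : ℝ) := by
        apply mul_le_mul_of_nonneg_right (poch_abs_le hb a n) (by positivity)
    _ = ((b + |a|)/b)^n * ((ascPochhammer ℝ n).eval b * (n.factorial : ℝ)) := by ring

lemma Phi_eq (a b x : ℝ) : Phi a b x = ∑' n : ℕ, pc a b n * x ^ n := rfl

lemma pc_summable {b : ℝ} (hb : 0 < b) (a x : ℝ) :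
    Summable (fun n : ℕ => pc a b n * x ^ n) := by
  apply Summable.of_norm_bounded (Real.summable_pow_div_factorial (((b + |a|)/b) * |x|))
  intro n
  rw [norm_mul, norm_pow, Real.norm_eq_abs, Real.norm_eq_abs, mul_pow]
  calc |pc a b n| * |x|^n ≤ (((b + |a|)/b)^n / n.factorial) * |x|^n := by
        apply mul_le_mul_of_nonneg_right (pc_abs_le hb a n) (by positivity)
    _ = ((b + |a|)/b)^n * |x|^n / n.factorial := by ring

lemma phi_hasSum {b : ℝ} (hb : 0 < b) (a x : ℝ) :
    HasSum (fun n : ℕ => pc a b n * x ^ n) (Phi a b x) :=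
  (pc_summable hb a x).hasSum

lemma deriv_bound {b : ℝ} (hb : 0 < b) (a : ℝ) {R : ℝ} (hR : 1 ≤ R) {y : ℝ}
    (hy : |y| ≤ R) (n : ℕ) :
    ‖pc a b n * ((n:ℝ) * y ^ (n-1))‖ ≤ (2 * ((b + |a|)/b) * R)^n / n.factorial := by
  set M := (b + |a|)/b with hM
  have hM0 : 0 < M := by positivity
  have hR0 : (0:ℝ) < R := lt_of_lt_of_le one_pos hR
  rw [Real.norm_eq_abs, abs_mul, abs_mul, abs_pow, Nat.abs_cast]
  have h1 : |y|^(n-1) ≤ R^n := by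
    calc |y|^(n-1) ≤ R^(n-1) := pow_le_pow_left₀ (abs_nonneg y) hy _
      _ ≤ R^n := pow_le_pow_right₀ hR (Nat.sub_le n 1)
  have h2 : (n:ℝ) ≤ 2^n := by
    exact_mod_cast (Nat.lt_two_pow_self (n := n)).le
  calc |pc a b n| * ((n:ℝ) * |y|^(n-1))
      ≤ (M^n / n.factorial) * (2^n * R^n) := by
        apply mul_le_mul (pc_abs_le hb a n) ?_ (by positivity) (by positivity)
        exact mul_le_mul h2 h1 (by positivity) (by positivity)
    _ = (2 * M * R)^n / n.factorial := by rw [mul_pow, mul_pow]; ring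

lemma phi_hasDerivAt {b : ℝ} (hb : 0 < b) (a x : ℝ) :
    HasDerivAt (fun y => Phi a b y) (a/b * Phi (a+1) (b+1) x) x := by
  set M := (b + |a|)/b with hM
  set R := |x| + 1 with hR
  have hR1 : (1:ℝ) ≤ R := by rw [hR]; linarith [abs_nonneg x]
  have hxball : x ∈ Metric.ball (0:ℝ) R := by
    simp [Metric.mem_ball, hR, Real.dist_eq]
  have key : HasDerivAt (fun y => ∑' n : ℕ, pc a b n * y ^ n)
      (∑' n : ℕ, pc a b n * ((n:ℝ) * x ^ (n-1))) x := by
    apply hasDerivAt_tsum_of_isPreconnected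
      (Real.summable_pow_div_factorial (2 * M * R)) Metric.isOpen_ball
      (convex_ball (0:ℝ) R).isPreconnected
      (fun n y _ => (hasDerivAt_pow n y).const_mul (pc a b n))
      (fun n y hy => ?_) hxball (pc_summable hb a x) hxball
    have : |y| ≤ R := by
      rw [Metric.mem_ball, Real.dist_eq, sub_zero] at hy; exact hy.le
    exact deriv_bound hb a hR1 this n
  have hsum : Summable (fun n : ℕ => pc a b n * ((n:ℝ) * x ^ (n-1))) := by
    apply Summable.of_norm_bounded (Real.summable_pow_div_factorial (2 * M * R))
    intro n
    exact deriv_bound hb a hR1 (by rw [hR]; linarith [abs_nonneg x]) n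
  have hD : (∑' n : ℕ, pc a b n * ((n:ℝ) * x ^ (n-1)))
      = a/b * Phi (a+1) (b+1) x := by
    rw [hsum.tsum_eq_zero_add]
    simp only [Nat.cast_zero, zero_mul, mul_zero, zero_add]
    have hterm : ∀ n : ℕ, pc a b (n+1) * (((n:ℝ)+1) * x ^ n)
        = a/b * (pc (a+1) (b+1) n * x ^ n) := by
      intro n
      have e1 : pc a b (n+1) = a * (ascPochhammer ℝ n).eval (a+1) /
          (b * (ascPochhammer ℝ n).eval (b+1) * ((n+1) * n.factorial : ℕ)) := by
        rw [pc, poch_succ_eval_left a n, poch_succ_eval_left b n, Nat.factorial_succ]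
      rw [e1, pc]
      have hb1 : (ascPochhammer ℝ n).eval (b+1) ≠ 0 := (poch_pos (by linarith) n).ne'
      have hf : (n.factorial : ℝ) ≠ 0 := Nat.cast_ne_zero.mpr n.factorial_ne_zero
      push_cast
      field_simp
    have hc : ∀ n : ℕ, pc a b (n+1) * (((n+1:ℕ):ℝ) * x ^ (n+1-1)) = a/b * (pc (a+1) (b+1) n * x ^ n) := by
      intro n
      rw [Nat.add_sub_cancel]
      push_cast
      exact hterm n
    rw [tsum_congr hc, tsum_mul_left, Phi_eq]
  rw [← hD]
  exact key

lemma pc_zero (a b : ℝ) : pc a b 0 = 1 := by simp [pc]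

lemma pc_shift {b : ℝ} (hb : 0 < b) (a : ℝ) (n : ℕ) :
    pc a b (n+1) * ((n:ℝ)+1) = a/b * pc (a+1) (b+1) n := by
  have e1 : pc a b (n+1) = a * (ascPochhammer ℝ n).eval (a+1) /
      (b * (ascPochhammer ℝ n).eval (b+1) * ((n+1) * n.factorial : ℕ)) := by
    rw [pc, poch_succ_eval_left a n, poch_succ_eval_left b n, Nat.factorial_succ]
  rw [e1, pc]
  have hb1 : (ascPochhammer ℝ n).eval (b+1) ≠ 0 := (poch_pos (by linarith) n).ne'
  have hf : (n.factorial : ℝ) ≠ 0 := Nat.cast_ne_zero.mpr n.factorial_ne_zero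
  push_cast
  field_simp

lemma pc_succ {b : ℝ} (hb : 0 < b) (a : ℝ) (n : ℕ) :
    pc a b (n+1) * ((b + n) * ((n:ℝ)+1)) = pc a b n * (a + n) := by
  rw [pc, pc, poch_succ_eval a n, poch_succ_eval b n, Nat.factorial_succ]
  have hbn : (ascPochhammer ℝ n).eval b ≠ 0 := (poch_pos hb n).ne'
  have hbn2 : b + (n:ℝ) ≠ 0 := by positivity
  have hf : (n.factorial : ℝ) ≠ 0 := Nat.cast_ne_zero.mpr n.factorial_ne_zero
  push_cast
  field_simp

lemma kummer {b : ℝ} (hb : 0 < b) (a z : ℝ) :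
    z * (a/b * ((a+1)/(b+1)) * Phi (a+2) (b+2) z) + (b - z) * (a/b * Phi (a+1) (b+1) z)
      = a * Phi a b z := by
  set K : ℝ := a/b * ((a+1)/(b+1)) with hK
  have hb1 : (0:ℝ) < b + 1 := by linarith
  have hb2 : (0:ℝ) < b + 2 := by linarith
  have h2 : HasSum (fun n : ℕ => pc (a+2) (b+2) n * z ^ n) (Phi (a+2) (b+2) z) :=
    phi_hasSum hb2 (a+2) z
  have h1 : HasSum (fun n : ℕ => pc (a+1) (b+1) n * z ^ n) (Phi (a+1) (b+1) z) :=
    phi_hasSum hb1 (a+1) z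
  -- shifted series for z * (K * Phi2)
  set fA : ℕ → ℝ := fun n => Nat.casesOn n 0
    (fun m => z * (K * (pc (a+2) (b+2) m * z ^ m))) with hfA
  have hA' : HasSum (fun n : ℕ => fA (n+1)) (z * (K * Phi (a+2) (b+2) z)) :=
    (h2.mul_left K).mul_left z
  have hA : HasSum fA (z * (K * Phi (a+2) (b+2) z)) := by
    have := (hasSum_nat_add_iff (f := fA) 1).mp hA'
    simpa [hfA] using this
  -- shifted series for z * (a/b * Phi1)
  set fC : ℕ → ℝ := fun n => Nat.casesOn n 0
    (fun m => z * (a/b * (pc (a+1) (b+1) m * z ^ m))) with hfC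
  have hC' : HasSum (fun n : ℕ => fC (n+1)) (z * (a/b * Phi (a+1) (b+1) z)) :=
    (h1.mul_left (a/b)).mul_left z
  have hC : HasSum fC (z * (a/b * Phi (a+1) (b+1) z)) := by
    have := (hasSum_nat_add_iff (f := fC) 1).mp hC'
    simpa [hfC] using this
  have hB : HasSum (fun n : ℕ => b * (a/b * (pc (a+1) (b+1) n * z ^ n)))
      (b * (a/b * Phi (a+1) (b+1) z)) := (h1.mul_left (a/b)).mul_left b
  have htot : HasSum (fun n : ℕ => fA n + b * (a/b * (pc (a+1) (b+1) n * z ^ n)) - fC n)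
      (z * (K * Phi (a+2) (b+2) z) + b * (a/b * Phi (a+1) (b+1) z)
        - z * (a/b * Phi (a+1) (b+1) z)) := (hA.add hB).sub hC
  have hL : HasSum (fun n : ℕ => a * (pc a b n * z ^ n)) (a * Phi a b z) :=
    (phi_hasSum hb a z).mul_left a
  have hfun : (fun n : ℕ => fA n + b * (a/b * (pc (a+1) (b+1) n * z ^ n)) - fC n)
      = (fun n : ℕ => a * (pc a b n * z ^ n)) := by
    funext n
    cases n with
    | zero =>
      simp only [hfA, hfC, pc_zero, pow_zero]
      field_simp
      simp
    | succ n =>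
      show z * (K * (pc (a+2) (b+2) n * z ^ n))
          + b * (a/b * (pc (a+1) (b+1) (n+1) * z ^ (n+1)))
          - z * (a/b * (pc (a+1) (b+1) n * z ^ n))
          = a * (pc a b (n+1) * z ^ (n+1))
      have s1 : a/b * pc (a+1) (b+1) n = pc a b (n+1) * ((n:ℝ)+1) :=
        (pc_shift hb a n).symm
      have s2 : (a+1)/(b+1) * pc (a+2) (b+2) n = pc (a+1) (b+1) (n+1) * ((n:ℝ)+1) := by
        have := (pc_shift hb1 (a+1) n).symm
        rw [show a+1+1 = a+2 by ring, show b+1+1 = b+2 by ring] at this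
        exact this
      have s3 : a/b * pc (a+1) (b+1) (n+1) = pc a b (n+2) * ((n:ℝ)+2) := by
        have := (pc_shift hb a (n+1)).symm
        push_cast at this ⊢
        linarith [this]
      have hrec : pc a b (n+2) * ((b + ((n:ℝ)+1)) * (((n:ℝ)+1)+1))
          = pc a b (n+1) * (a + ((n:ℝ)+1)) := by
        have := pc_succ hb a (n+1)
        push_cast at this ⊢
        linarith [this]
      have hKpc : K * pc (a+2) (b+2) n
          = pc a b (n+2) * ((n:ℝ)+2) * ((n:ℝ)+1) := by
        rw [hK]
        calc a/b * ((a+1)/(b+1)) * pc (a+2) (b+2) n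
            = a/b * ((a+1)/(b+1) * pc (a+2) (b+2) n) := by ring
          _ = a/b * (pc (a+1) (b+1) (n+1) * ((n:ℝ)+1)) := by rw [s2]
          _ = (a/b * pc (a+1) (b+1) (n+1)) * ((n:ℝ)+1) := by ring
          _ = pc a b (n+2) * ((n:ℝ)+2) * ((n:ℝ)+1) := by rw [s3]
      calc z * (K * (pc (a+2) (b+2) n * z ^ n))
          + b * (a/b * (pc (a+1) (b+1) (n+1) * z ^ (n+1)))
          - z * (a/b * (pc (a+1) (b+1) n * z ^ n))
          = (K * pc (a+2) (b+2) n) * z ^ (n+1)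
            + b * ((a/b * pc (a+1) (b+1) (n+1)) * z ^ (n+1))
            - (a/b * pc (a+1) (b+1) n) * z ^ (n+1) := by ring
        _ = (pc a b (n+2) * ((n:ℝ)+2) * ((n:ℝ)+1)) * z ^ (n+1)
            + b * ((pc a b (n+2) * ((n:ℝ)+2)) * z ^ (n+1))
            - (pc a b (n+1) * ((n:ℝ)+1)) * z ^ (n+1) := by rw [hKpc, s3, s1]
        _ = a * (pc a b (n+1) * z ^ (n+1)) := by linear_combination z^(n+1) * hrec
  rw [hfun] at htot
  have := htot.unique hL
  linarith [this]

lemma phi_continuous {b : ℝ} (hb : 0 < b) (a : ℝ) : Continuous (fun y => Phi a b y) :=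
  continuous_iff_continuousAt.mpr fun x => (phi_hasDerivAt hb a x).differentiableAt.continuousAt

theorem stmt0 (ξ η b z : ℝ) (hb : 0 < b) (hz : 0 < z) (hne : ξ ≠ η) :
    ∫ t in (0 : ℝ)..z, t ^ (b - 1) * Real.exp (-t) * Phi ξ b t * Phi η b t =
      Real.exp (-z) * z ^ b / (b * (η - ξ)) *
        (η * Phi ξ b z * Phi (η + 1) (b + 1) z - ξ * Phi η b z * Phi (ξ + 1) (b + 1) z) := by
  have hb1 : (0:ℝ) < b + 1 := by linarith
  set W : ℝ → ℝ := fun t =>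
    (ξ/b * Phi (ξ+1) (b+1) t) * Phi η b t - (η/b * Phi (η+1) (b+1) t) * Phi ξ b t with hW
  set F : ℝ → ℝ := fun t => t ^ b * Real.exp (-t) * W t with hF
  -- derivative of W
  have hWderiv : ∀ t : ℝ, HasDerivAt W
      ((ξ/b * ((ξ+1)/(b+1) * Phi (ξ+2) (b+2) t)) * Phi η b t
        + (ξ/b * Phi (ξ+1) (b+1) t) * (η/b * Phi (η+1) (b+1) t)
        - ((η/b * ((η+1)/(b+1) * Phi (η+2) (b+2) t)) * Phi ξ b t
        + (η/b * Phi (η+1) (b+1) t) * (ξ/b * Phi (ξ+1) (b+1) t))) t := by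
    intro t
    have d1 : HasDerivAt (fun y => ξ/b * Phi (ξ+1) (b+1) y)
        (ξ/b * ((ξ+1)/(b+1) * Phi (ξ+2) (b+2) t)) t := by
      have := (phi_hasDerivAt hb1 (ξ+1) t).const_mul (ξ/b)
      rw [show ξ+1+1 = ξ+2 by ring, show b+1+1 = b+2 by ring] at this
      exact this
    have d2 : HasDerivAt (fun y => η/b * Phi (η+1) (b+1) y)
        (η/b * ((η+1)/(b+1) * Phi (η+2) (b+2) t)) t := by
      have := (phi_hasDerivAt hb1 (η+1) t).const_mul (η/b)
      rw [show η+1+1 = η+2 by ring, show b+1+1 = b+2 by ring] at this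
      exact this
    exact ((d1.mul (phi_hasDerivAt hb η t)).sub (d2.mul (phi_hasDerivAt hb ξ t)))
  have hWcont : Continuous W := by
    apply Continuous.sub
    · exact (continuous_const.mul (phi_continuous hb1 (ξ+1))).mul (phi_continuous hb η)
    · exact (continuous_const.mul (phi_continuous hb1 (η+1))).mul (phi_continuous hb ξ)
  -- derivative of F on (0, ∞)
  have hFderiv : ∀ t : ℝ, 0 < t → HasDerivAt F
      ((ξ - η) * (t ^ (b-1) * Real.exp (-t) * Phi ξ b t * Phi η b t)) t := by
    intro t ht
    have hrpow : HasDerivAt (fun s : ℝ => s ^ b) (b * t ^ (b-1)) t :=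
      Real.hasDerivAt_rpow_const (Or.inl ht.ne')
    have hexp : HasDerivAt (fun s : ℝ => Real.exp (-s)) (Real.exp (-t) * (-1)) t :=
      ((hasDerivAt_id t).neg).exp.congr_deriv (by simp [mul_comm])
    have hprod := (hrpow.mul hexp).mul (hWderiv t)
    have htb : t ^ b = t ^ (b-1) * t := by
      rw [← Real.rpow_add_one ht.ne' (b-1)]; ring_nf
    refine hprod.congr_deriv ?_
    symm
    simp only [Pi.mul_apply]
    have kξ := kummer hb ξ t
    have kη := kummer hb η t
    rw [hW, htb]
    linear_combination (t^(b-1) * Real.exp (-t) * Phi ξ b t) * kη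
      - (t^(b-1) * Real.exp (-t) * Phi η b t) * kξ
  -- continuity of F on [0, z]
  have hFcont : ContinuousOn F (Set.Icc 0 z) := by
    apply ContinuousOn.mul
    apply ContinuousOn.mul
    · intro x hx
      apply ContinuousAt.continuousWithinAt
      exact Real.continuousAt_rpow_const x b (Or.inr hb.le)
    · exact (Real.continuous_exp.comp continuous_neg).continuousOn
    · exact hWcont.continuousOn
  -- integrability
  have hcont3 : Continuous (fun t => Real.exp (-t) * Phi ξ b t * Phi η b t) :=
    ((Real.continuous_exp.comp continuous_neg).mul (phi_continuous hb ξ)).mul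
      (phi_continuous hb η)
  have hint : IntervalIntegrable
      (fun t => (ξ - η) * (t ^ (b-1) * Real.exp (-t) * Phi ξ b t * Phi η b t))
      MeasureTheory.volume 0 z := by
    apply IntervalIntegrable.const_mul
    have h1 : IntervalIntegrable (fun t : ℝ => t ^ (b-1)) MeasureTheory.volume 0 z :=
      intervalIntegral.intervalIntegrable_rpow' (by linarith)
    have := h1.mul_continuousOn hcont3.continuousOn
    have heq : (fun t : ℝ => t ^ (b-1) * (Real.exp (-t) * Phi ξ b t * Phi η b t))
        = fun t : ℝ => t ^ (b-1) * Real.exp (-t) * Phi ξ b t * Phi η b t := by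
      funext t; ring
    rwa [heq] at this
  -- FTC
  have hftc : ∫ t in (0:ℝ)..z,
      (ξ - η) * (t ^ (b-1) * Real.exp (-t) * Phi ξ b t * Phi η b t) = F z - F 0 := by
    apply intervalIntegral.integral_eq_sub_of_hasDeriv_right_of_le hz.le hFcont
      (fun t ht => (hFderiv t ht.1).hasDerivWithinAt) hint
  have hF0 : F 0 = 0 := by
    simp [hF, Real.zero_rpow hb.ne']
  rw [hF0, sub_zero] at hftc
  rw [intervalIntegral.integral_const_mul] at hftc
  have hξη : ξ - η ≠ 0 := sub_ne_zero.mpr hne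
  have hgoal : ∫ t in (0:ℝ)..z, t ^ (b-1) * Real.exp (-t) * Phi ξ b t * Phi η b t
      = F z / (ξ - η) := by
    field_simp at hftc ⊢
    linarith [hftc]
  rw [hgoal]
  have hηξ : η - ξ ≠ 0 := sub_ne_zero.mpr (Ne.symm hne)
  have hbne : b ≠ 0 := hb.ne'
  have hFz : F z = z ^ b * Real.exp (-z) *
      ((ξ * Phi (ξ+1) (b+1) z * Phi η b z - η * Phi (η+1) (b+1) z * Phi ξ b z) / b) := by
    simp only [hF, hW]
    field_simp
  rw [hFz]
  field_simp
  ring
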